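/- If T is a tree with bipartition {A, B} and S is a maximal stable set of T containing no pendant vertex of T, then |S| ≤ min(|A|, |B|). -/
import Mathlib


open Finset SimpleGraph
open scoped Classical

variable {V : Type*}

/-- A stable (independent) set of vertices. -/
def stableSet (G : SimpleGraph V) (S : Finset V) : Prop :=
  ∀ u ∈ S, ∀ w ∈ S, ¬ G.Adj u w

/-- A maximum stable set. -/
def maxStableSet [Fintype V] (G : SimpleGraph V) (S : Finset V) : Prop :=
  stableSet G S ∧ ∀ S' : Finset V, stableSet G S' → S'.card ≤ S.card

/-- The independence number α(G). -/
noncomputable def alphaNum [Fintype V] (G : SimpleGraph V) : ℕ :=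
  ((Finset.univ : Finset V).powerset.filter (fun S => stableSet G S)).sup Finset.card

/-- core(G): the intersection of all maximum stable sets of G. -/
noncomputable def coreSet [Fintype V] (G : SimpleGraph V) : Finset V :=
  Finset.univ.filter (fun v => ∀ S : Finset V, maxStableSet G S → v ∈ S)

/-- A pendant vertex: a vertex with exactly one neighbor. -/
def pendant (G : SimpleGraph V) (v : V) : Prop :=
  ∃! w, G.Adj v w

/-- {A, B} is a bipartition of G into color classes. -/
def isBipartition [Fintype V] (G : SimpleGraph V) (A B : Finset V) : Prop :=
  Disjoint A B ∧ A ∪ B = Finset.univ ∧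
    ∀ u v, G.Adj u v → (u ∈ A ∧ v ∈ B) ∨ (u ∈ B ∧ v ∈ A)

/-- A maximal stable set. -/
def maximalStableSet (G : SimpleGraph V) (S : Finset V) : Prop :=
  stableSet G S ∧ ∀ S' : Finset V, stableSet G S' → S ⊆ S' → S' = S

section Aux

variable [Fintype V] {T : SimpleGraph V} {A B : Finset V}

lemma aux_notA_iff (hAB : isBipartition T A B) (v : V) : v ∉ A ↔ v ∈ B := by
  have h1 := Finset.disjoint_left.mp hAB.1
  have h2 : v ∈ A ∪ B := by rw [hAB.2.1]; exact Finset.mem_univ v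
  rw [Finset.mem_union] at h2
  tauto

lemma aux_walk_parity (hAB : isBipartition T A B) {x y : V} (p : T.Walk x y) :
    ((x ∈ A) ↔ (y ∈ A)) ↔ Even p.length := by
  induction p with
  | nil => simp
  | @cons x z y h q ih =>
    have hxz : ¬ (x ∈ A ↔ z ∈ A) := by
      have := hAB.2.2 x z h
      have hx := aux_notA_iff hAB x
      have hz := aux_notA_iff hAB z
      have := Finset.disjoint_left.mp hAB.1
      tauto
    rw [SimpleGraph.Walk.length_cons, Nat.even_add_one, ← ih]
    tauto

lemma aux_parent_unique (hT : T.IsTree) (r : V) {w v1 v2 : V}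
    (h1 : T.Adj v1 w) (h2 : T.Adj v2 w)
    (d1 : T.dist r v1 + 1 = T.dist r w) (d2 : T.dist r v2 + 1 = T.dist r w) :
    v1 = v2 := by
  obtain ⟨p1, hp1⟩ := hT.isConnected.exists_walk_length_eq_dist r v1
  obtain ⟨p2, hp2⟩ := hT.isConnected.exists_walk_length_eq_dist r v2
  have hq1 : (p1.concat h1).IsPath := by
    apply SimpleGraph.Walk.isPath_of_length_eq_dist
    rw [SimpleGraph.Walk.length_concat, hp1, d1]
  have hq2 : (p2.concat h2).IsPath := by
    apply SimpleGraph.Walk.isPath_of_length_eq_dist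
    rw [SimpleGraph.Walk.length_concat, hp2, d2]
  obtain ⟨q, -, hq⟩ := hT.existsUnique_path r w
  have heq : p1.concat h1 = p2.concat h2 := by
    rw [hq _ hq1, hq _ hq2]
  exact (SimpleGraph.Walk.concat_inj heq).1

lemma aux_adj_dist (hT : T.IsTree) (hAB : isBipartition T A B) (r : V) {v w : V}
    (h : T.Adj v w) :
    T.dist r w = T.dist r v + 1 ∨ T.dist r w + 1 = T.dist r v := by
  obtain ⟨p, hp⟩ := hT.isConnected.exists_walk_length_eq_dist r v
  obtain ⟨q, hq⟩ := hT.isConnected.exists_walk_length_eq_dist r w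
  have hle1 : T.dist r w ≤ T.dist r v + 1 := by
    have := T.dist_le (p.concat h)
    rwa [SimpleGraph.Walk.length_concat, hp] at this
  have hle2 : T.dist r v ≤ T.dist r w + 1 := by
    have := T.dist_le (q.concat h.symm)
    rwa [SimpleGraph.Walk.length_concat, hq] at this
  have hne : T.dist r v ≠ T.dist r w := by
    intro heq
    have e1 := aux_walk_parity hAB p
    have e2 := aux_walk_parity hAB q
    rw [hp] at e1; rw [hq] at e2
    rw [heq] at e1
    have hvw : ¬ (v ∈ A ↔ w ∈ A) := by
      have := hAB.2.2 v w h
      have hx := aux_notA_iff hAB v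
      have hz := aux_notA_iff hAB w
      have := Finset.disjoint_left.mp hAB.1
      tauto
    tauto
  omega

lemma aux_exists_child (hT : T.IsTree) (hAB : isBipartition T A B)
    (hn : 2 ≤ Fintype.card V) (r : V) {v : V} (hv : ¬ pendant T v) :
    ∃ w, T.Adj v w ∧ T.dist r w = T.dist r v + 1 := by
  -- v has at least one neighbor
  obtain ⟨u, hu⟩ := Fintype.exists_ne_of_one_lt_card (by omega) v
  obtain ⟨p⟩ := hT.isConnected v u
  have hx : ∃ x, T.Adj v x := by
    cases p with
    | nil => exact absurd rfl hu
    | cons h q => exact ⟨_, h⟩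
  obtain ⟨x, hx⟩ := hx
  -- v has a second neighbor
  have hy : ∃ y, T.Adj v y ∧ y ≠ x := by
    by_contra hc
    push_neg at hc
    exact hv ⟨x, hx, hc⟩
  obtain ⟨y, hy, hyx⟩ := hy
  rcases aux_adj_dist hT hAB r hx with hdx | hdx
  · exact ⟨x, hx, hdx⟩
  rcases aux_adj_dist hT hAB r hy with hdy | hdy
  · exact ⟨y, hy, hdy⟩
  exact absurd (aux_parent_unique hT r hx.symm hy.symm hdx (by omega)) (Ne.symm hyx)

lemma aux_card_le (hT : T.IsTree) (hn : 2 ≤ Fintype.card V)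
    (hAB : isBipartition T A B) {S : Finset V} (hS : stableSet T S)
    (hpend : ∀ v ∈ S, ¬ pendant T v) : S.card ≤ A.card := by
  have : Nonempty V := Fintype.card_pos_iff.mp (by omega)
  obtain ⟨r⟩ := this
  set childFn : V → V := fun v =>
    if h : ∃ w, T.Adj v w ∧ T.dist r w = T.dist r v + 1 then h.choose else v with hcf
  have hchild : ∀ v ∈ S, T.Adj v (childFn v) ∧ T.dist r (childFn v) = T.dist r v + 1 := by
    intro v hvS
    have h := aux_exists_child hT hAB hn r (hpend v hvS)
    simp only [hcf, dif_pos h]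
    exact h.choose_spec
  set g : V → V := fun v => if v ∈ A then v else childFn v with hg
  apply Finset.card_le_card_of_injOn g
  · intro v hvS
    by_cases hvA : v ∈ A
    · simpa [hg, hvA]
    · have hadj := (hchild v hvS).1
      have := hAB.2.2 v (childFn v) hadj
      have hvB := (aux_notA_iff hAB v).mp hvA
      have := Finset.disjoint_left.mp hAB.1
      simp only [hg, if_neg hvA]
      tauto
  · intro v1 hv1 v2 hv2 heq
    simp only [Finset.mem_coe] at hv1 hv2
    have hnotS : ∀ v ∈ S, v ∉ A → childFn v ∉ S := by
      intro v hvS hvA hcS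
      exact hS v hvS (childFn v) hcS (hchild v hvS).1
    by_cases h1 : v1 ∈ A <;> by_cases h2 : v2 ∈ A <;>
        simp only [hg, if_pos, if_neg, h1, h2, if_true, if_false] at heq
    · exact heq
    · exact absurd (heq ▸ hv1) (hnotS v2 hv2 h2)
    · exact absurd (heq ▸ hv2) (hnotS v1 hv1 h1)
    · have c1 := hchild v1 hv1
      have c2 := hchild v2 hv2
      rw [← heq] at c2
      exact aux_parent_unique hT r c1.1 c2.1 (by omega) (by omega)

lemma aux_swap (hAB : isBipartition T A B) : isBipartition T B A :=
  ⟨hAB.1.symm, by rw [Finset.union_comm]; exact hAB.2.1,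
    fun u v h => (hAB.2.2 u v h).symm⟩

end Aux

theorem stmt9 [Fintype V] (T : SimpleGraph V) (hT : T.IsTree)
    (hn : 2 ≤ Fintype.card V) (A B : Finset V) (hAB : isBipartition T A B)
    (S : Finset V) (hS : maximalStableSet T S)
    (hpend : ∀ v ∈ S, ¬ pendant T v) :
    S.card ≤ min A.card B.card := by
  refine le_min ?_ ?_
  · exact aux_card_le hT hn hAB hS.1 hpend
  · exact aux_card_le hT hn (aux_swap hAB) hS.1 hpend
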